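/- Let A and B be distinct F-cliques, with |A| > 1, of a coloring of an AGW graph that has no stable pair of distinct states. Then |A| − |A ∩ B| = |B| − |A ∩ B| > 1. -/
import Mathlib


/-- A directed cycle in the multigraph `E`: a nonempty list of distinct vertices,
consecutive vertices joined by edges, and an edge from the last back to the first. -/
def IsCycle {V : Type} (E : V → Multiset V) (l : List V) : Prop :=
  ∃ h : l ≠ [], l.Nodup ∧ l.Chain' (fun a b => b ∈ E a) ∧ l.head h ∈ E (l.getLast h)

/-- An AGW graph: constant outdegree `k`, strongly connected, and the gcd of the
lengths of all directed cycles is 1 (every common divisor of cycle lengths is 1). -/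
def IsAGW {V : Type} (E : V → Multiset V) (k : ℕ) : Prop :=
  (∀ v, Multiset.card (E v) = k) ∧
  (∀ u v : V, Relation.ReflTransGen (fun a b => b ∈ E a) u v) ∧
  (∀ d : ℕ, (∀ l : List V, IsCycle E l → d ∣ l.length) → d = 1)

/-- A coloring of the multigraph: for every vertex `v` the multiset of images
`{δ a v : a ∈ Fin k}` (with multiplicity) equals `E v`. -/
def IsColoring {V : Type} [Fintype V] {k : ℕ} (E : V → Multiset V)
    (δ : Fin k → V → V) : Prop :=
  ∀ v, Multiset.map (fun a => δ a v) (Finset.univ : Finset (Fin k)).val = E v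

/-- The map `δ_s` of a word `s`: apply the letters of `s` from left to right. -/
def wordMap {V : Type} {k : ℕ} (δ : Fin k → V → V) (s : List (Fin k)) (v : V) : V :=
  s.foldl (fun x a => δ a x) v

/-- A pair of states is synchronizing if some word maps them to the same state. -/
def SyncPair {V : Type} {k : ℕ} (δ : Fin k → V → V) (p q : V) : Prop :=
  ∃ s : List (Fin k), wordMap δ s p = wordMap δ s q

/-- A pair is stable if all of its images under words are equal or synchronizing. -/
def Stable {V : Type} {k : ℕ} (δ : Fin k → V → V) (p q : V) : Prop :=
  ∀ u : List (Fin k), SyncPair δ (wordMap δ u p) (wordMap δ u q)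

/-- A word is synchronizing if it maps the whole state set to a single state. -/
def IsSynchronizingWord {V : Type} {k : ℕ} (δ : Fin k → V → V) (s : List (Fin k)) : Prop :=
  ∃ q : V, ∀ v : V, wordMap δ s v = q

/-- An F-clique: an image `V·s` of the whole state set in which every pair of
distinct states is a deadlock (not synchronizing). -/
def IsFClique {V : Type} [Fintype V] [DecidableEq V] {k : ℕ}
    (δ : Fin k → V → V) (F : Finset V) : Prop :=
  (∃ s : List (Fin k), F = Finset.image (wordMap δ s) Finset.univ) ∧
  ∀ p ∈ F, ∀ q ∈ F, p ≠ q → ¬ SyncPair δ p q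

/-- A weight function: positive and a left eigenvector of the adjacency matrix
(multiplicities of edges) with eigenvalue `k`. -/
def IsWeight {V : Type} [Fintype V] [DecidableEq V] (E : V → Multiset V) (k : ℕ)
    (w : V → ℕ) : Prop :=
  (∀ v, 1 ≤ w v) ∧ ∀ q, (∑ p, w p * (E p).count q) = k * w q

/-- The weight of a set of vertices. -/
def weight {V : Type} (w : V → ℕ) (D : Finset V) : ℕ := ∑ p ∈ D, w p

/-- `D` is mapped to a single state by some word. -/
def IsSyncSet {V : Type} [Fintype V] [DecidableEq V] {k : ℕ} (δ : Fin k → V → V)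
    (D : Finset V) : Prop :=
  ∃ s : List (Fin k), (D.image (wordMap δ s)).card = 1

/-- An F-maximal set: a set mapped to a single state by some word, of maximal weight. -/
def IsFMaximal {V : Type} [Fintype V] [DecidableEq V] {k : ℕ} (δ : Fin k → V → V)
    (w : V → ℕ) (D : Finset V) : Prop :=
  IsSyncSet δ D ∧ ∀ D' : Finset V, IsSyncSet δ D' → weight w D' ≤ weight w D

/-- `w*`: the maximal weight of a set mapped to a single state by some word. -/
noncomputable def wstar {V : Type} [Fintype V] [DecidableEq V] {k : ℕ}
    (δ : Fin k → V → V) (w : V → ℕ) : ℕ :=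
  sSup {m | ∃ D : Finset V, IsSyncSet δ D ∧ weight w D = m}

/-- A spanning subgraph: a choice of one outgoing edge of every vertex. -/
def IsSpanning {V : Type} (E : V → Multiset V) (f : V → V) : Prop :=
  ∀ v, f v ∈ E v

/-- The level of a vertex: the least `m` such that `f^[m] v` is `f`-periodic. -/
noncomputable def level {V : Type} (f : V → V) (v : V) : ℕ :=
  sInf {m | ∃ n > 0, f^[n] (f^[m] v) = f^[m] v}

/-- The root of a vertex: its image on the cycle reached along its tree. -/
noncomputable def root {V : Type} (f : V → V) (v : V) : V :=
  f^[level f v] v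

lemma wordMap_append' {V : Type} {k : ℕ} (δ : Fin k → V → V) (s t : List (Fin k)) (v : V) :
    wordMap δ (s ++ t) v = wordMap δ t (wordMap δ s v) := by
  simp [wordMap, List.foldl_append]

/-- A deadlock set: every pair of distinct states in it is a deadlock. -/
def IsDeadlockSet {V : Type} {k : ℕ} (δ : Fin k → V → V) (D : Finset V) : Prop :=
  ∀ p ∈ D, ∀ q ∈ D, p ≠ q → ¬ SyncPair δ p q

lemma deadlock_injOn {V : Type} [DecidableEq V] {k : ℕ} {δ : Fin k → V → V} {D : Finset V}
    (hD : IsDeadlockSet δ D) (t : List (Fin k)) :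
    Set.InjOn (wordMap δ t) (D : Set V) := by
  intro p hp q hq h
  by_contra hne
  exact hD p hp q hq hne ⟨t, h⟩

lemma deadlock_image {V : Type} [DecidableEq V] {k : ℕ} {δ : Fin k → V → V} {D : Finset V}
    (hD : IsDeadlockSet δ D) (t : List (Fin k)) :
    IsDeadlockSet δ (D.image (wordMap δ t)) := by
  intro p' hp' q' hq' hne ⟨u, hu⟩
  obtain ⟨p, hp, rfl⟩ := Finset.mem_image.1 hp'
  obtain ⟨q, hq, rfl⟩ := Finset.mem_image.1 hq'
  have hpq : p ≠ q := by rintro rfl; exact hne rfl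
  exact hD p hp q hq hpq ⟨t ++ u, by simpa [wordMap_append'] using hu⟩

lemma deadlock_card_le {V : Type} [Fintype V] [DecidableEq V] {k : ℕ} {δ : Fin k → V → V}
    {D A : Finset V} (hD : IsDeadlockSet δ D) (hA : IsFClique δ A) :
    D.card ≤ A.card := by
  obtain ⟨⟨s, rfl⟩, _⟩ := hA
  calc D.card = (D.image (wordMap δ s)).card :=
        (Finset.card_image_of_injOn (deadlock_injOn hD s)).symm
    _ ≤ (Finset.image (wordMap δ s) Finset.univ).card :=
        Finset.card_le_card (Finset.image_subset_image (Finset.subset_univ D))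

lemma clique_card_eq {V : Type} [Fintype V] [DecidableEq V] {k : ℕ} {δ : Fin k → V → V}
    {A B : Finset V} (hA : IsFClique δ A) (hB : IsFClique δ B) : A.card = B.card :=
  le_antisymm (deadlock_card_le hA.2 hB) (deadlock_card_le hB.2 hA)

/-- If `A`, `B` are distinct F-cliques with `|A| > 1` of a coloring
without stable pairs of distinct states, then `|A| − |A∩B| = |B| − |A∩B| > 1`. -/
theorem FClique_diff_card {V : Type} [Fintype V] [DecidableEq V] [Nonempty V]
    (E : V → Multiset V) (k : ℕ) (hAGW : IsAGW E k)
    (δ : Fin k → V → V) (hδ : IsColoring E δ)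
    (hnostable : ∀ p q : V, p ≠ q → ¬ Stable δ p q)
    (A B : Finset V) (hA : IsFClique δ A) (hB : IsFClique δ B)
    (hAB : A ≠ B) (hcard : 1 < A.card) :
    A.card - (A ∩ B).card = B.card - (A ∩ B).card ∧ 1 < A.card - (A ∩ B).card := by
  have hcardeq : A.card = B.card := clique_card_eq hA hB
  refine ⟨by rw [hcardeq], ?_⟩
  have hAdiff : (A \ B).card = A.card - (A ∩ B).card := by
    have := Finset.card_sdiff_add_card_inter A B
    omega
  have hBdiff : (B \ A).card = B.card - (A ∩ B).card := by
    have := Finset.card_sdiff_add_card_inter B A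
    rw [Finset.inter_comm] at this
    omega
  -- A \ B is nonempty
  have hne : (A \ B).Nonempty := by
    rw [Finset.sdiff_nonempty]
    intro hsub
    exact hAB (Finset.eq_of_subset_of_card_le hsub (le_of_eq hcardeq.symm))
  rw [← hAdiff]
  by_contra hle
  have h1 : (A \ B).card = 1 := le_antisymm (Nat.not_lt.1 hle) hne.card_pos
  have h1' : (B \ A).card = 1 := by omega
  obtain ⟨p, hp⟩ := Finset.card_eq_one.1 h1
  obtain ⟨q, hq⟩ := Finset.card_eq_one.1 h1'
  have hpA : p ∈ A ∧ p ∉ B := by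
    have : p ∈ A \ B := hp ▸ Finset.mem_singleton_self p
    exact ⟨(Finset.mem_sdiff.1 this).1, (Finset.mem_sdiff.1 this).2⟩
  have hqB : q ∈ B ∧ q ∉ A := by
    have : q ∈ B \ A := hq ▸ Finset.mem_singleton_self q
    exact ⟨(Finset.mem_sdiff.1 this).1, (Finset.mem_sdiff.1 this).2⟩
  have hpq : p ≠ q := fun h => hqB.2 (h ▸ hpA.1)
  refine hnostable p q hpq ?_
  intro u
  by_contra hsync
  have hne' : wordMap δ u p ≠ wordMap δ u q := fun h => hsync ⟨[], by simpa [wordMap] using h⟩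
  -- build the deadlock set A·u ∪ {δ_u q}
  set D : Finset V := insert (wordMap δ u q) (A.image (wordMap δ u)) with hD
  have hAmem : ∀ a ∈ A, a ≠ p → a ∈ B := by
    intro a ha hap
    by_contra hb
    have : a ∈ A \ B := Finset.mem_sdiff.2 ⟨ha, hb⟩
    exact hap (by simpa [hp] using this)
  have hDdead : IsDeadlockSet δ D := by
    intro x hx y hy hxy
    rw [hD, Finset.mem_insert] at hx hy
    have key : ∀ a ∈ A, wordMap δ u a ≠ wordMap δ u q →
        ¬ SyncPair δ (wordMap δ u a) (wordMap δ u q) := by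
      intro a ha hne2 ⟨v, hv⟩
      rcases eq_or_ne a p with rfl | hap
      · exact hsync ⟨v, hv⟩
      · have haB := hAmem a ha hap
        have haq : a ≠ q := fun h => hqB.2 (h ▸ ha)
        exact hB.2 a haB q hqB.1 haq ⟨u ++ v, by simpa [wordMap_append'] using hv⟩
    rcases hx with rfl | hx
    · rcases hy with rfl | hy
      · exact absurd rfl hxy
      · obtain ⟨a, ha, rfl⟩ := Finset.mem_image.1 hy
        rintro ⟨v, hv⟩
        exact key a ha (Ne.symm hxy) ⟨v, hv.symm⟩
    · rcases hy with rfl | hy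
      · obtain ⟨a, ha, rfl⟩ := Finset.mem_image.1 hx
        exact key a ha hxy
      · exact deadlock_image hA.2 u x hx y hy hxy
  have hqnot : wordMap δ u q ∉ A.image (wordMap δ u) := by
    intro h
    obtain ⟨a, ha, hav⟩ := Finset.mem_image.1 h
    rcases eq_or_ne a p with rfl | hap
    · exact hne' hav
    · have haB := hAmem a ha hap
      have haq : a ≠ q := fun h' => hqB.2 (h' ▸ ha)
      exact hB.2 a haB q hqB.1 haq ⟨u, hav⟩
  have hDcard : D.card = A.card + 1 := by
    rw [hD, Finset.card_insert_of_notMem hqnot,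
      Finset.card_image_of_injOn (deadlock_injOn hA.2 u)]
  have := deadlock_card_le hDdead hA
  omega
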